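/- arXiv:1702.06787 — 3 statements merged into one kernel-verified Lean document; each statement's English description precedes it below -/
import Mathlib

section
/- Let H be a separable infinite-dimensional real Hilbert space, ℓ ∈ ℕ, F : H → ℝ^ℓ a continuous linear operator, y ∈ ℝ^ℓ, and λ ≥ 0. Suppose a sequence is defined by F₀ ∈ H, R⁰ = y − F F₀, and for each n, Fₙ₊₁ = Fₙ + αₙ₊₁ dₙ₊₁ and Rⁿ⁺¹ = Rⁿ − αₙ₊₁ F dₙ₊₁, where dₙ₊₁ ∈ H \ {0} and αₙ₊₁ = (⟨Rⁿ, F dₙ₊₁⟩ − λ⟨Fₙ, dₙ₊₁⟩) / (‖F dₙ₊₁‖² + λ‖dₙ₊₁‖²). Then for all n ≥ 1: ‖Rⁿ‖² + λ‖Fₙ‖² = ‖Rⁿ⁻¹‖² + λ‖Fₙ₋₁‖² − (⟨Rⁿ⁻¹, F dₙ⟩ − λ⟨Fₙ₋₁, dₙ⟩)² / (‖F dₙ‖² + λ‖dₙ‖²). -/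
open RealInnerProductSpace Filter Topology

theorem rfmp_energy_identity
    {H : Type*} [NormedAddCommGroup H] [InnerProductSpace ℝ H] [CompleteSpace H]
    [TopologicalSpace.SeparableSpace H] (hinf : ¬ FiniteDimensional ℝ H)
    {ℓ : ℕ} (T : H →L[ℝ] EuclideanSpace ℝ (Fin ℓ))
    (y : EuclideanSpace ℝ (Fin ℓ)) (lam : ℝ) (hlam : 0 ≤ lam)
    (f : ℕ → H) (R : ℕ → EuclideanSpace ℝ (Fin ℓ)) (d : ℕ → H) (α : ℕ → ℝ)
    (hd : ∀ n : ℕ, d (n + 1) ≠ 0)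
    (hden : ∀ n : ℕ, 0 < ‖T (d (n + 1))‖ ^ 2 + lam * ‖d (n + 1)‖ ^ 2)
    (hR0 : R 0 = y - T (f 0))
    (hα : ∀ n : ℕ, α (n + 1) =
      (⟪R n, T (d (n + 1))⟫ - lam * ⟪f n, d (n + 1)⟫) /
        (‖T (d (n + 1))‖ ^ 2 + lam * ‖d (n + 1)‖ ^ 2))
    (hf : ∀ n : ℕ, f (n + 1) = f n + α (n + 1) • d (n + 1))
    (hR : ∀ n : ℕ, R (n + 1) = R n - α (n + 1) • T (d (n + 1))) :
    ∀ n : ℕ,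
      ‖R (n + 1)‖ ^ 2 + lam * ‖f (n + 1)‖ ^ 2 =
        ‖R n‖ ^ 2 + lam * ‖f n‖ ^ 2 -
          (⟪R n, T (d (n + 1))⟫ - lam * ⟪f n, d (n + 1)⟫) ^ 2 /
            (‖T (d (n + 1))‖ ^ 2 + lam * ‖d (n + 1)‖ ^ 2) := by
  intro n
  have hDne : (‖T (d (n + 1))‖ ^ 2 + lam * ‖d (n + 1)‖ ^ 2) ≠ 0 := (hden n).ne'
  have ha := hα n
  rw [hR n, hf n]
  rw [@norm_sub_sq_real, @norm_add_sq_real, inner_smul_right, inner_smul_right,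
    norm_smul, norm_smul, mul_pow, mul_pow]
  simp only [Real.norm_eq_abs, sq_abs]
  rw [ha]
  field_simp
  ring
end

section
/- Let H be a Hilbert space, F : H → ℝ^ℓ bounded linear, y ∈ ℝ^ℓ. Suppose (Fₙ) converges strongly to F∞ in H, Rⁿ := y − F Fₙ, and ⟨Rⁿ, F d⟩ → 0 for every d in a set D ⊂ H with span(F D) = ran F. Then F F∞ = P_{ran F} y, where P_{ran F} is the orthogonal projection of ℝ^ℓ onto ran F. -/
open RealInnerProductSpace Filter Topology

theorem rfmp_unregularized_limit_projection
    {H : Type*} [NormedAddCommGroup H] [InnerProductSpace ℝ H] [CompleteSpace H]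
    {ℓ : ℕ} (T : H →L[ℝ] EuclideanSpace ℝ (Fin ℓ))
    (y : EuclideanSpace ℝ (Fin ℓ))
    (f : ℕ → H) (Finf : H) (hconv : Tendsto f atTop (𝓝 Finf))
    (R : ℕ → EuclideanSpace ℝ (Fin ℓ)) (hR : ∀ n : ℕ, R n = y - T (f n))
    (D : Set H)
    (hD : ∀ d ∈ D, Tendsto (fun n : ℕ => ⟪R n, T d⟫) atTop (𝓝 0))
    (hspan : Submodule.span ℝ (T '' D) = LinearMap.range (T : H →ₗ[ℝ] EuclideanSpace ℝ (Fin ℓ))) :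
    T Finf = (Submodule.orthogonalProjectionOnto (LinearMap.range (T : H →ₗ[ℝ] EuclideanSpace ℝ (Fin ℓ))) y : EuclideanSpace ℝ (Fin ℓ)) := by
  have hRconv : Tendsto R atTop (𝓝 (y - T Finf)) := by
    have : Tendsto (fun n => y - T (f n)) atTop (𝓝 (y - T Finf)) :=
      tendsto_const_nhds.sub ((T.continuous.tendsto Finf).comp hconv)
    simpa only [funext hR] using this
  -- inner product with T d vanishes in the limit
  have hzero : ∀ d ∈ D, ⟪T d, y - T Finf⟫ = 0 := by
    intro d hd
    have h1 : Tendsto (fun n => ⟪R n, T d⟫) atTop (𝓝 ⟪y - T Finf, T d⟫) :=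
      (Continuous.inner continuous_id continuous_const).continuousAt.tendsto.comp hRconv
    have := tendsto_nhds_unique h1 (hD d hd)
    rw [real_inner_comm]
    exact this
  have horth : y - T Finf ∈ (LinearMap.range (T : H →ₗ[ℝ] EuclideanSpace ℝ (Fin ℓ)))ᗮ := by
    rw [← hspan]
    intro v hv
    induction hv using Submodule.span_induction with
    | mem v hv => obtain ⟨d, hd, rfl⟩ := hv; exact hzero d hd
    | zero => simp
    | add v w _ _ hv hw => rw [inner_add_left, hv, hw, add_zero]
    | smul c v _ hv => rw [inner_smul_left, hv, mul_zero]
  have hmem : T Finf ∈ LinearMap.range (T : H →ₗ[ℝ] EuclideanSpace ℝ (Fin ℓ)) := ⟨Finf, rfl⟩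
  rw [← Submodule.starProjection_apply]
  exact (Submodule.eq_starProjection_of_mem_of_inner_eq_zero hmem
    (fun w hw => by
      have := horth w hw
      rwa [real_inner_comm] at this)).symm
end

section
/- Under the RFMP iteration with λ = 0, a bounded dictionary (sup ‖d‖ = C₂ < ∞), and αₙ → 0, it holds that ⟨Rⁿ, F d⟩ → 0 as n → ∞ for every d ∈ D with F d ≠ 0. -/
open RealInnerProductSpace Filter Topology

theorem rfmp_unregularized_residual_inner_tendsto_zero
    {H : Type*} [NormedAddCommGroup H] [InnerProductSpace ℝ H] [CompleteSpace H]
    {ℓ : ℕ} (T : H →L[ℝ] EuclideanSpace ℝ (Fin ℓ))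
    (y : EuclideanSpace ℝ (Fin ℓ))
    (D : Set H) (hD0 : ∀ d ∈ D, d ≠ (0 : H))
    (C₂ : ℝ) (hC₂ : ∀ d ∈ D, ‖d‖ ≤ C₂)
    (f : ℕ → H) (R : ℕ → EuclideanSpace ℝ (Fin ℓ)) (d : ℕ → H) (α : ℕ → ℝ)
    (hR : ∀ n : ℕ, R n = y - T (f n))
    (hdmem : ∀ n : ℕ, d (n + 1) ∈ D)
    (hdne : ∀ n : ℕ, T (d (n + 1)) ≠ 0)
    (hgreedy : ∀ n : ℕ, ∀ e ∈ D, T e ≠ 0 →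
      (⟪R n, T e⟫) ^ 2 / ‖T e‖ ^ 2 ≤
        (⟪R n, T (d (n + 1))⟫) ^ 2 / ‖T (d (n + 1))‖ ^ 2)
    (hα : ∀ n : ℕ, α (n + 1) = ⟪R n, T (d (n + 1))⟫ / ‖T (d (n + 1))‖ ^ 2)
    (hα0 : Tendsto (fun n : ℕ => α (n + 1)) atTop (𝓝 0)) :
    ∀ e ∈ D, T e ≠ 0 →
      Tendsto (fun n : ℕ => ⟪R n, T e⟫) atTop (𝓝 0) := by
  intro e he hTe
  have hC₂0 : 0 ≤ C₂ := le_trans (norm_nonneg e) (hC₂ e he)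
  set K := ‖T‖ * C₂ * ‖T e‖ with hK
  have hbound : ∀ n, ‖⟪R n, T e⟫‖ ≤ |α (n + 1)| * K := by
    intro n
    have hg := hgreedy n e he hTe
    have hTd : ‖T (d (n + 1))‖ ≤ ‖T‖ * C₂ := by
      refine (T.le_opNorm _).trans ?_
      exact mul_le_mul_of_nonneg_left (hC₂ _ (hdmem n)) (norm_nonneg T)
    have hTdpos : 0 < ‖T (d (n + 1))‖ := norm_pos_iff.mpr (hdne n)
    have hTepos : 0 < ‖T e‖ := norm_pos_iff.mpr hTe
    have hc : ⟪R n, T (d (n + 1))⟫ = α (n + 1) * ‖T (d (n + 1))‖ ^ 2 := by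
      rw [hα n]; field_simp
    rw [div_le_div_iff₀ (by positivity) (by positivity)] at hg
    have h2 : ⟪R n, T e⟫ ^ 2 ≤ (|α (n + 1)| * K) ^ 2 := by
      have hTd2 : ‖T (d (n + 1))‖ ^ 2 ≤ (‖T‖ * C₂) ^ 2 := by
        exact pow_le_pow_left₀ hTdpos.le hTd 2
      have habs : |α (n + 1)| ^ 2 = α (n + 1) ^ 2 := sq_abs _
      rw [hc] at hg
      have h1 : ⟪R n, T e⟫ ^ 2 ≤ α (n + 1) ^ 2 * ‖T (d (n + 1))‖ ^ 2 * ‖T e‖ ^ 2 := by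
        nlinarith [mul_pos hTdpos hTdpos, hg]
      have h3 : α (n + 1) ^ 2 * ‖T (d (n + 1))‖ ^ 2 * ‖T e‖ ^ 2 ≤ (|α (n + 1)| * K) ^ 2 := by
        rw [hK, mul_pow, habs]
        nlinarith [mul_le_mul_of_nonneg_left hTd2 (mul_nonneg (sq_nonneg (α (n + 1))) (sq_nonneg ‖T e‖))]
      linarith
    have hKα : 0 ≤ |α (n + 1)| * K := by positivity
    have : |⟪R n, T e⟫| ≤ |α (n + 1)| * K := by
      nlinarith [sq_abs (⟪R n, T e⟫), abs_nonneg (⟪R n, T e⟫)]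
    simpa using this
  refine squeeze_zero_norm hbound ?_
  simpa using (hα0.abs.mul_const K)
end
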